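/- Let S be a numerical semigroup and let I, I' be proper maximum sparse ideals of S with leaders λ and λ' respectively. Then the following are equivalent: (1) I ⊆ I'; (2) λ - λ' ∈ S (where the difference is taken in ℤ and required to be a nonnegative element of S); (3) S \ I' ⊆ S \ I; (4) #(S \ I) - #(S \ I') is a nonnegative integer belonging to S. -/
import Mathlib


/-- `S` is a numerical semigroup: it contains `0`, is closed under addition,
and has finite complement in `ℕ`. -/
def IsNumericalSemigroup (S : Set ℕ) : Prop :=
  0 ∈ S ∧ (∀ a ∈ S, ∀ b ∈ S, a + b ∈ S) ∧ Sᶜ.Finite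

/-- The genus of `S`: the number of gaps, i.e. of elements of `ℕ \ S`. -/
noncomputable def genus (S : Set ℕ) : ℕ := Sᶜ.ncard

/-- The numConductor of `S`: the smallest integer `c` such that every integer `≥ c`
belongs to `S`. -/
noncomputable def numConductor (S : Set ℕ) : ℕ := sInf {c : ℕ | ∀ m, c ≤ m → m ∈ S}

/-- `I` is an ideal of `S`: a nonempty subset of `S` with `I + S ⊆ I`. -/
def IsIdeal (S I : Set ℕ) : Prop :=
  I.Nonempty ∧ I ⊆ S ∧ ∀ i ∈ I, ∀ s ∈ S, i + s ∈ I

/-- The Frobenius number of an ideal `I`: the largest integer not belonging to `I`. -/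
noncomputable def frobeniusNumber (I : Set ℕ) : ℕ := sSup Iᶜ

/-- `I` is a maximum sparse ideal of `S`: its Frobenius number equals
`2g - 1 + #(S \ I)` where `g` is the genus of `S`. -/
def IsMaxSparse (S I : Set ℕ) : Prop :=
  (frobeniusNumber I : ℤ) = 2 * (genus S : ℤ) - 1 + ((S \ I).ncard : ℤ)

/-- The leader of a proper ideal `I` of `S`: the largest element of `S \ I`. -/
noncomputable def leader (S I : Set ℕ) : ℕ := sSup (S \ I)

lemma maxSparse_key (S I : Set ℕ) (hS : IsNumericalSemigroup S) (hI : IsIdeal S I)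
    (hproper : I ≠ S) (hms : IsMaxSparse S I) :
    leader S I ∈ S ∧ leader S I ∉ I ∧
    (∀ x, x ∉ I → x ≤ leader S I ∧ leader S I - x ∈ S) ∧
    (leader S I : ℤ) = 2 * (genus S : ℤ) - 1 + ((S \ I).ncard : ℤ) := by
  classical
  obtain ⟨h0S, hadd, hSfin⟩ := hS
  obtain ⟨hne, hIS, hcl⟩ := hI
  obtain ⟨i₀, hi₀⟩ := hne
  have hNbig : ∀ m, sSup Sᶜ + 1 ≤ m → m ∈ S := by
    intro m hm
    by_contra h
    have := le_csSup hSfin.bddAbove (show m ∈ Sᶜ from h)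
    omega
  have hIcfin : Iᶜ.Finite := by
    apply (Set.finite_Iio (i₀ + sSup Sᶜ + 1)).subset
    intro x hx
    by_contra h
    simp only [Set.mem_Iio, not_lt] at h
    have h1 : x - i₀ ∈ S := hNbig _ (by omega)
    have h2 : i₀ + (x - i₀) ∈ I := hcl i₀ hi₀ _ h1
    rw [Nat.add_sub_cancel' (by omega)] at h2
    exact hx h2
  have h0I : 0 ∉ I := by
    intro h
    exact hproper (Set.Subset.antisymm hIS (fun s hs => by simpa using hcl 0 h s hs))
  set F := frobeniusNumber I with hFdef
  have hFmem : F ∉ I := Nat.sSup_mem ⟨0, h0I⟩ hIcfin.bddAbove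
  have hub : ∀ x, x ∉ I → x ≤ F := fun x hx => le_csSup hIcfin.bddAbove hx
  have hSIfin : (S \ I).Finite := hIcfin.subset (fun x hx => hx.2)
  have hsplit : Iᶜ = Sᶜ ∪ (S \ I) := by
    ext x
    constructor
    · intro hx
      by_cases h : x ∈ S
      · exact Or.inr ⟨h, hx⟩
      · exact Or.inl h
    · rintro (h | h)
      · exact fun hx => h (hIS hx)
      · exact h.2
  have hcardIc : Iᶜ.ncard = genus S + (S \ I).ncard := by
    rw [hsplit, Set.ncard_union_eq (Set.disjoint_left.2 (fun x hx hx2 => ((Set.mem_compl_iff S x).mp hx) hx2.1))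
      hSfin hSIfin]
    rfl
  have hAcard : ((Finset.range (F + 1)).filter (· ∈ I)).card
      + (genus S + (S \ I).ncard) = F + 1 := by
    have h1 : (Finset.range (F + 1)).filter (· ∉ I) = hIcfin.toFinset := by
      ext x
      simp only [Finset.mem_filter, Finset.mem_range, Set.Finite.mem_toFinset,
        Set.mem_compl_iff]
      exact ⟨fun h => h.2, fun h => ⟨by have := hub x h; omega, h⟩⟩
    have h2 := Finset.card_filter_add_card_filter_not
      (s := Finset.range (F + 1)) (p := (· ∈ I))
    rw [h1, Finset.card_range] at h2
    have h3 : hIcfin.toFinset.card = genus S + (S \ I).ncard := by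
      rw [← hcardIc, Set.ncard_eq_toFinset_card _ hIcfin]
    omega
  have hBcard : ((Finset.range (F + 1)).filter (fun x => F - x ∈ S)).card
      + genus S = F + 1 := by
    have hbij : ((Finset.range (F + 1)).filter (fun x => F - x ∈ S)).card
        = ((Finset.range (F + 1)).filter (· ∈ S)).card := by
      apply Finset.card_bij (fun x _ => F - x)
      · intro a ha
        simp only [Finset.mem_filter, Finset.mem_range] at ha ⊢
        exact ⟨by omega, ha.2⟩
      · intro a ha b hb h
        simp only [Finset.mem_filter, Finset.mem_range] at ha hb
        omega
      · intro b hb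
        simp only [Finset.mem_filter, Finset.mem_range] at hb ⊢
        refine ⟨F - b, ⟨by omega, by rw [Nat.sub_sub_self (by omega)]; exact hb.2⟩,
          Nat.sub_sub_self (by omega)⟩
    have h1 : (Finset.range (F + 1)).filter (· ∉ S) = hSfin.toFinset := by
      ext x
      simp only [Finset.mem_filter, Finset.mem_range, Set.Finite.mem_toFinset,
        Set.mem_compl_iff]
      exact ⟨fun h => h.2, fun h => ⟨by have := hub x (fun hx => h (hIS hx)); omega, h⟩⟩
    have h2 := Finset.card_filter_add_card_filter_not
      (s := Finset.range (F + 1)) (p := (· ∈ S))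
    rw [h1, Finset.card_range] at h2
    have h3 : hSfin.toFinset.card = genus S := (Set.ncard_eq_toFinset_card _ hSfin).symm
    omega
  have hdisj : Disjoint ((Finset.range (F + 1)).filter (· ∈ I))
      ((Finset.range (F + 1)).filter (fun x => F - x ∈ S)) := by
    rw [Finset.disjoint_left]
    intro x hxA hxB
    simp only [Finset.mem_filter, Finset.mem_range] at hxA hxB
    have := hcl x hxA.2 _ hxB.2
    rw [Nat.add_sub_cancel' (by omega)] at this
    exact hFmem this
  have hunion : ((Finset.range (F + 1)).filter (· ∈ I))
      ∪ ((Finset.range (F + 1)).filter (fun x => F - x ∈ S)) = Finset.range (F + 1) := by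
    apply Finset.eq_of_subset_of_card_le (Finset.union_subset (Finset.filter_subset _ _)
      (Finset.filter_subset _ _))
    rw [Finset.card_union_of_disjoint hdisj, Finset.card_range]
    rw [IsMaxSparse, ← hFdef] at hms
    omega
  have hkey : ∀ x, x ∉ I → x ≤ F ∧ F - x ∈ S := by
    intro x hx
    refine ⟨hub x hx, ?_⟩
    have hxT : x ∈ Finset.range (F + 1) := Finset.mem_range.2 (by have := hub x hx; omega)
    rw [← hunion] at hxT
    rcases Finset.mem_union.1 hxT with h | h
    · exact absurd (Finset.mem_filter.1 h).2 hx
    · exact (Finset.mem_filter.1 h).2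
  have hFS : F ∈ S := by simpa using (hkey 0 h0I).2
  have hlead : leader S I = F := by
    apply le_antisymm
    · exact csSup_le ⟨F, hFS, hFmem⟩ (fun y hy => hub y hy.2)
    · exact le_csSup hSIfin.bddAbove ⟨hFS, hFmem⟩
  rw [hlead]
  exact ⟨hFS, hFmem, hkey, hms⟩

/-- For proper maximum sparse ideals `I`, `I'` with leaders `λ`, `λ'`, the
following are equivalent: (1) `I ⊆ I'`; (2) `λ' ≤ λ` and `λ - λ' ∈ S`;
(3) `S \ I' ⊆ S \ I`; (4) `#(S \ I') ≤ #(S \ I)` and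
`#(S \ I) - #(S \ I') ∈ S`. -/
theorem maxSparse_inclusion_tfae (S I I' : Set ℕ)
    (hS : IsNumericalSemigroup S)
    (hI : IsIdeal S I) (hproperI : I ≠ S) (hmsI : IsMaxSparse S I)
    (hI' : IsIdeal S I') (hproperI' : I' ≠ S) (hmsI' : IsMaxSparse S I') :
    [ I ⊆ I',
      leader S I' ≤ leader S I ∧ leader S I - leader S I' ∈ S,
      S \ I' ⊆ S \ I,
      (S \ I').ncard ≤ (S \ I).ncard ∧ (S \ I).ncard - (S \ I').ncard ∈ S
    ].TFAE := by
  obtain ⟨hFS, hFI, hkey, heq⟩ := maxSparse_key S I hS hI hproperI hmsI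
  obtain ⟨hFS', hFI', hkey', heq'⟩ := maxSparse_key S I' hS hI' hproperI' hmsI'
  tfae_have 1 → 3 := by
    intro h x hx
    exact ⟨hx.1, fun hxI => hx.2 (h hxI)⟩
  tfae_have 3 → 1 := by
    intro h x hx
    by_contra hx'
    exact (h ⟨hI.2.1 hx, hx'⟩).2 hx
  tfae_have 3 → 2 := by
    intro h
    have := h ⟨hFS', hFI'⟩
    exact hkey _ this.2
  tfae_have 2 → 3 := by
    rintro ⟨hle, hmem⟩ s hs
    obtain ⟨hs1, hs2⟩ := hkey' s hs.2
    have hsum : leader S I - s = (leader S I - leader S I') + (leader S I' - s) := by omega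
    have hmem2 : leader S I - s ∈ S := by
      rw [hsum]; exact hS.2.1 _ hmem _ hs2
    refine ⟨hs.1, fun hsI => ?_⟩
    have := hI.2.2 s hsI _ hmem2
    rw [Nat.add_sub_cancel' (by omega)] at this
    exact hFI this
  tfae_have 2 → 4 := by
    rintro ⟨h1, h2⟩
    have e1 : (S \ I').ncard ≤ (S \ I).ncard := by omega
    have e2 : (S \ I).ncard - (S \ I').ncard = leader S I - leader S I' := by omega
    exact ⟨e1, e2 ▸ h2⟩
  tfae_have 4 → 2 := by
    rintro ⟨h1, h2⟩
    have e1 : leader S I' ≤ leader S I := by omega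
    have e2 : leader S I - leader S I' = (S \ I).ncard - (S \ I').ncard := by omega
    exact ⟨e1, e2 ▸ h2⟩
  tfae_finish
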